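/- Let V ⊂ H be complex Hilbert spaces with V continuously embedded in H, and let a₀(t,·,·), a₁(t,·,·) (t ∈ [0,T]) be families of continuous sesquilinear forms on V such that t ↦ a₀(t,u,v) is continuously differentiable (with derivative denoted a₀'(t,u,v)), a₀ is Hermitian, and t ↦ a₁(t,u,v) is continuous. Suppose u ∈ C²([0,T],V) and f ∈ C([0,T],H) satisfy ⟨u''(t),v⟩_H + a₀(t,u(t),v) + a₁(t,u(t),v) = ⟨f(t),v⟩_H for all v ∈ V and all t ∈ [0,T]. Then for all t ∈ [0,T]: ‖u'(t)‖_H² + a₀(t,u(t),u(t)) = ‖u'(0)‖_H² + a₀(0,u(0),u(0)) − 2∫₀ᵗ Re a₁(τ,u(τ),u'(τ)) dτ + ∫₀ᵗ a₀'(τ,u(τ),u(τ)) dτ + 2∫₀ᵗ Re⟨f(τ),u'(τ)⟩_H dτ. -/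

import Mathlib

open MeasureTheory intervalIntegral

open Filter Set

/-- Joint limit lemma for a bounded biadditive family of forms. -/
private lemma sesq_tendsto {V : Type*} [NormedAddCommGroup V] [NormedSpace ℂ V]
    (b : ℝ → V → V → ℂ) (S : Set ℝ) (K : ℝ)
    (hadd1 : ∀ s ∈ S, ∀ u u' v : V, b s (u + u') v = b s u v + b s u' v)
    (hadd2 : ∀ s ∈ S, ∀ u v v' : V, b s u (v + v') = b s u v + b s u v')
    (hbd : ∀ s ∈ S, ∀ u v : V, ‖b s u v‖ ≤ K * ‖u‖ * ‖v‖)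
    {l : Filter ℝ} (hl : l ≤ Filter.principal S)
    {p q : ℝ → V} {P Q : V} (hp : Tendsto p l (nhds P)) (hq : Tendsto q l (nhds Q))
    {c : ℂ} (hc : Tendsto (fun s => b s P Q) l (nhds c)) :
    Tendsto (fun s => b s (p s) (q s)) l (nhds c) := by
  have hmem : ∀ᶠ s in l, s ∈ S := hl (mem_principal_self S)
  have h1 : Tendsto (fun s => b s (p s - P) (q s)) l (nhds 0) := by
    apply squeeze_zero_norm' (a := fun s => K * ‖p s - P‖ * ‖q s‖)
    · filter_upwards [hmem] with s hs
      exact hbd s hs _ _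
    · have : Tendsto (fun s => K * ‖p s - P‖ * ‖q s‖) l (nhds (K * ‖P - P‖ * ‖Q‖)) :=
        (tendsto_const_nhds.mul ((hp.sub tendsto_const_nhds).norm)).mul hq.norm
      simpa using this
  have h2 : Tendsto (fun s => b s P (q s - Q)) l (nhds 0) := by
    apply squeeze_zero_norm' (a := fun s => K * ‖P‖ * ‖q s - Q‖)
    · filter_upwards [hmem] with s hs
      exact hbd s hs _ _
    · have : Tendsto (fun s => K * ‖P‖ * ‖q s - Q‖) l (nhds (K * ‖P‖ * ‖Q - Q‖)) :=
        tendsto_const_nhds.mul ((hq.sub tendsto_const_nhds).norm)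
      simpa using this
  have key : (fun s => b s (p s - P) (q s) + b s P (q s - Q) + b s P Q)
      =ᶠ[l] fun s => b s (p s) (q s) := by
    filter_upwards [hmem] with s hs
    have e1 := hadd1 s hs (p s - P) P (q s)
    rw [sub_add_cancel] at e1
    have e2 := hadd2 s hs P (q s - Q) Q
    rw [sub_add_cancel] at e2
    rw [e1, e2]; ring
  have := (h1.add h2).add hc
  simpa using this.congr' key

/-- Chain rule for `s ↦ b s (x s) (y s)` for a bounded sesquilinear family. -/
private lemma sesq_hasDeriv {V : Type*} [NormedAddCommGroup V] [NormedSpace ℂ V]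
    (b b' : ℝ → V → V → ℂ) (S : Set ℝ) (K : ℝ)
    (hadd1 : ∀ s ∈ S, ∀ u u' v : V, b s (u + u') v = b s u v + b s u' v)
    (hadd2 : ∀ s ∈ S, ∀ u v v' : V, b s u (v + v') = b s u v + b s u v')
    (hsmul1 : ∀ s ∈ S, ∀ (r : ℝ) (u v : V), b s (r • u) v = r • b s u v)
    (hsmul2 : ∀ s ∈ S, ∀ (r : ℝ) (u v : V), b s u (r • v) = r • b s u v)
    (hbd : ∀ s ∈ S, ∀ u v : V, ‖b s u v‖ ≤ K * ‖u‖ * ‖v‖)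
    (hb' : ∀ u v : V, ∀ t ∈ S, HasDerivWithinAt (fun s => b s u v) (b' t u v) S t)
    {x y : ℝ → V} {x' y' : V} {t : ℝ} (ht : t ∈ S)
    (hx : HasDerivWithinAt x x' S t) (hy : HasDerivWithinAt y y' S t) :
    HasDerivWithinAt (fun s => b s (x s) (y s))
      (b' t (x t) (y t) + b t x' (y t) + b t (x t) y') S t := by
  rw [hasDerivWithinAt_iff_tendsto_slope]
  set l := nhdsWithin t (S \ {t}) with hldef
  have hlS : l ≤ nhdsWithin t S := nhdsWithin_mono t diff_subset
  have hl : l ≤ Filter.principal S :=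
    le_trans (le_principal_iff.mpr self_mem_nhdsWithin)
      (principal_mono.mpr diff_subset)
  have hmem : ∀ᶠ s in l, s ∈ S \ {t} := self_mem_nhdsWithin
  have hxc : Tendsto x l (nhds (x t)) := hx.continuousWithinAt.mono_left hlS
  have hyc : Tendsto y l (nhds (y t)) := hy.continuousWithinAt.mono_left hlS
  have hxs : Tendsto (fun s => slope x t s) l (nhds x') :=
    hasDerivWithinAt_iff_tendsto_slope.mp hx
  have hys : Tendsto (fun s => slope y t s) l (nhds y') :=
    hasDerivWithinAt_iff_tendsto_slope.mp hy
  have hA : Tendsto (fun s => b s (slope x t s) (y s)) l (nhds (b t x' (y t))) :=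
    sesq_tendsto b S K hadd1 hadd2 hbd hl hxs hyc
      ((hb' x' (y t) t ht).continuousWithinAt.mono_left hlS)
  have hB : Tendsto (fun s => b s (x t) (slope y t s)) l (nhds (b t (x t) y')) :=
    sesq_tendsto b S K hadd1 hadd2 hbd hl tendsto_const_nhds hys
      ((hb' (x t) y' t ht).continuousWithinAt.mono_left hlS)
  have hC : Tendsto (slope (fun s => b s (x t) (y t)) t) l (nhds (b' t (x t) (y t))) :=
    hasDerivWithinAt_iff_tendsto_slope.mp (hb' (x t) (y t) t ht)
  have key : (fun s => slope (fun s => b s (x t) (y t)) t s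
        + b s (slope x t s) (y s) + b s (x t) (slope y t s))
      =ᶠ[l] slope (fun s => b s (x s) (y s)) t := by
    filter_upwards [hmem] with s hs
    have hsS : s ∈ S := hs.1
    have e1 := hadd1 s hsS (x s - x t) (x t) (y s)
    rw [sub_add_cancel] at e1
    have e2 := hadd2 s hsS (x t) (y s - y t) (y t)
    rw [sub_add_cancel] at e2
    have edec : b s (x s) (y s) - b t (x t) (y t)
        = b s (x s - x t) (y s) + b s (x t) (y s - y t)
          + (b s (x t) (y t) - b t (x t) (y t)) := by
      rw [e1, e2]; ring
    have r1 : (s - t)⁻¹ • b s (x s - x t) (y s) = b s (slope x t s) (y s) := by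
      rw [slope_def_module, hsmul1 s hsS]
    have r2 : (s - t)⁻¹ • b s (x t) (y s - y t) = b s (x t) (slope y t s) := by
      rw [slope_def_module, hsmul2 s hsS]
    rw [slope_def_module (fun s => b s (x s) (y s)) t s,
      slope_def_module (fun s => b s (x t) (y t)) t s, edec, smul_add, smul_add, r1, r2]
    ring
  exact ((hC.add hA).add hB).congr' key

/- STATEMENT 3: the energy identity for the abstract second-order evolution equation.
   `V ⊆ H` are complex Hilbert spaces, the continuous embedding being the injective
   continuous linear map `ι`.  The families of continuous sesquilinear forms
   `a₀ a₁ : ℝ → V → V → ℂ` (linear in the second argument, conjugate-linear in the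
   third) satisfy: `t ↦ a₀(t,u,v)` is continuously differentiable on `[0,T]` with
   derivative `a₀'(t,u,v)`, `a₀` is Hermitian, and `t ↦ a₁(t,u,v)` is continuous.
   The pairing `⟨h, v⟩_H` for `h ∈ H`, `v ∈ V` is `inner ℂ (ι v) h` (linear in `h`,
   conjugate-linear in `v`).  If `u ∈ C²([0,T],V)` (with `u' = w`, `u'' = z`) and
   `f ∈ C([0,T],H)` satisfy `⟨u''(t),v⟩_H + a₀(t,u(t),v) + a₁(t,u(t),v) = ⟨f(t),v⟩_H`
   for all `v ∈ V`, `t ∈ [0,T]`, then for all `t ∈ [0,T]`: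
   `‖u'(t)‖² + a₀(t,u(t),u(t)) = ‖u'(0)‖² + a₀(0,u(0),u(0))
      - 2∫₀ᵗ Re a₁(τ,u(τ),u'(τ)) dτ + ∫₀ᵗ a₀'(τ,u(τ),u(τ)) dτ
      + 2∫₀ᵗ Re ⟨f(τ),u'(τ)⟩_H dτ`. -/

theorem energy_identity {V H : Type*}
    [NormedAddCommGroup V] [InnerProductSpace ℂ V] [CompleteSpace V]
    [NormedAddCommGroup H] [InnerProductSpace ℂ H] [CompleteSpace H]
    (ι : V →L[ℂ] H) (hι : Function.Injective ι)
    (T : ℝ) (hT : 0 < T)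
    (a₀ a₀' a₁ : ℝ → V → V → ℂ) (C C₀ C₁ : ℝ)
    -- `a₀(t,·,·)` is a continuous sesquilinear Hermitian form
    (h0add : ∀ t ∈ Set.Icc (0:ℝ) T, ∀ u u' v : V, a₀ t (u + u') v = a₀ t u v + a₀ t u' v)
    (h0smul : ∀ t ∈ Set.Icc (0:ℝ) T, ∀ (z : ℂ) (u v : V), a₀ t (z • u) v = z * a₀ t u v)
    (h0herm : ∀ t ∈ Set.Icc (0:ℝ) T, ∀ u v : V, a₀ t u v = (starRingEnd ℂ) (a₀ t v u))
    (h0bd : ∀ t ∈ Set.Icc (0:ℝ) T, ∀ u v : V, ‖a₀ t u v‖ ≤ C * ‖u‖ * ‖v‖)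
    -- `t ↦ a₀(t,u,v)` is continuously differentiable on `[0,T]` with derivative `a₀'`
    (h0deriv : ∀ u v : V, ∀ t ∈ Set.Icc (0:ℝ) T,
      HasDerivWithinAt (fun s => a₀ s u v) (a₀' t u v) (Set.Icc 0 T) t)
    (h0contd : ∀ u v : V, ContinuousOn (fun t => a₀' t u v) (Set.Icc 0 T))
    (h0bd' : ∀ t ∈ Set.Icc (0:ℝ) T, ∀ u v : V, ‖a₀' t u v‖ ≤ C₀ * ‖u‖ * ‖v‖)
    -- `a₁(t,·,·)` is a continuous sesquilinear form, continuous in `t`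
    (h1add₁ : ∀ t ∈ Set.Icc (0:ℝ) T, ∀ u u' v : V, a₁ t (u + u') v = a₁ t u v + a₁ t u' v)
    (h1smul₁ : ∀ t ∈ Set.Icc (0:ℝ) T, ∀ (z : ℂ) (u v : V), a₁ t (z • u) v = z * a₁ t u v)
    (h1add₂ : ∀ t ∈ Set.Icc (0:ℝ) T, ∀ u v v' : V, a₁ t u (v + v') = a₁ t u v + a₁ t u v')
    (h1smul₂ : ∀ t ∈ Set.Icc (0:ℝ) T, ∀ (z : ℂ) (u v : V),
      a₁ t u (z • v) = (starRingEnd ℂ) z * a₁ t u v)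
    (h1bd : ∀ t ∈ Set.Icc (0:ℝ) T, ∀ u v : V, ‖a₁ t u v‖ ≤ C₁ * ‖u‖ * ‖v‖)
    (h1cont : ∀ u v : V, ContinuousOn (fun t => a₁ t u v) (Set.Icc 0 T))
    -- the solution `u ∈ C²([0,T],V)` with `u' = w`, `u'' = z`, and the data `f ∈ C([0,T],H)`
    (u w z : ℝ → V) (f : ℝ → H)
    (hu : ∀ t ∈ Set.Icc (0:ℝ) T, HasDerivWithinAt u (w t) (Set.Icc 0 T) t)
    (hw : ∀ t ∈ Set.Icc (0:ℝ) T, HasDerivWithinAt w (z t) (Set.Icc 0 T) t)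
    (hz : ContinuousOn z (Set.Icc 0 T))
    (hf : ContinuousOn f (Set.Icc 0 T))
    -- the equation
    (heq : ∀ t ∈ Set.Icc (0:ℝ) T, ∀ v : V,
      (inner ℂ (ι v) (ι (z t)) : ℂ) + a₀ t (u t) v + a₁ t (u t) v = (inner ℂ (ι v) (f t) : ℂ)) :
    ∀ t ∈ Set.Icc (0:ℝ) T,
      ‖ι (w t)‖ ^ 2 + (a₀ t (u t) (u t)).re
        = ‖ι (w 0)‖ ^ 2 + (a₀ 0 (u 0) (u 0)).re
          - 2 * (∫ τ in (0:ℝ)..t, (a₁ τ (u τ) (w τ)).re)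
          + (∫ τ in (0:ℝ)..t, (a₀' τ (u τ) (u τ)).re)
          + 2 * (∫ τ in (0:ℝ)..t, ((inner ℂ (f τ) (ι (w τ)) : ℂ)).re) := by
  
  have hucont : ContinuousOn u (Set.Icc 0 T) := fun s hs => (hu s hs).continuousWithinAt
  have hwcont : ContinuousOn w (Set.Icc 0 T) := fun s hs => (hw s hs).continuousWithinAt
  -- derived algebraic properties of `a₀`
  have h0add2 : ∀ t ∈ Set.Icc (0:ℝ) T, ∀ p q q' : V,
      a₀ t p (q + q') = a₀ t p q + a₀ t p q' := by
    intro t ht p q q'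
    rw [h0herm t ht, h0add t ht, map_add, ← h0herm t ht, ← h0herm t ht]
  have h0smul1R : ∀ t ∈ Set.Icc (0:ℝ) T, ∀ (r : ℝ) (p q : V),
      a₀ t (r • p) q = r • a₀ t p q := by
    intro t ht r p q
    rw [← Complex.coe_smul, h0smul t ht, Complex.real_smul]
  have h0smul2R : ∀ t ∈ Set.Icc (0:ℝ) T, ∀ (r : ℝ) (p q : V),
      a₀ t p (r • q) = r • a₀ t p q := by
    intro t ht r p q
    rw [h0herm t ht, h0smul1R t ht, Complex.real_smul, map_mul, Complex.conj_ofReal,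
      ← h0herm t ht, Complex.real_smul]
  -- `a₀'` is additive in both vector arguments (by uniqueness of derivatives)
  have hUD : ∀ t ∈ Set.Icc (0:ℝ) T, UniqueDiffWithinAt ℝ (Set.Icc (0:ℝ) T) t :=
    fun t ht => uniqueDiffOn_Icc hT t ht
  have h0'add1 : ∀ t ∈ Set.Icc (0:ℝ) T, ∀ p q v : V,
      a₀' t (p + q) v = a₀' t p v + a₀' t q v := by
    intro t ht p q v
    refine (hUD t ht).eq_deriv _ (h0deriv (p + q) v t ht) ?_
    exact ((h0deriv p v t ht).add (h0deriv q v t ht)).congr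
      (fun s hs => h0add s hs p q v) (h0add t ht p q v)
  have h0'add2 : ∀ t ∈ Set.Icc (0:ℝ) T, ∀ p q q' : V,
      a₀' t p (q + q') = a₀' t p q + a₀' t p q' := by
    intro t ht p q q'
    refine (hUD t ht).eq_deriv _ (h0deriv p (q + q') t ht) ?_
    exact ((h0deriv p q t ht).add (h0deriv p q' t ht)).congr
      (fun s hs => h0add2 s hs p q q') (h0add2 t ht p q q')
  -- joint continuity of the integrands
  have ha1c : ContinuousOn (fun τ => a₁ τ (u τ) (w τ)) (Set.Icc 0 T) := fun s hs =>
    sesq_tendsto a₁ _ C₁ h1add₁ h1add₂ h1bd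
      (le_principal_iff.mpr self_mem_nhdsWithin) (hucont s hs) (hwcont s hs)
      (h1cont (u s) (w s) s hs)
  have ha0'c : ContinuousOn (fun τ => a₀' τ (u τ) (u τ)) (Set.Icc 0 T) := fun s hs =>
    sesq_tendsto a₀' _ C₀ h0'add1 h0'add2 h0bd'
      (le_principal_iff.mpr self_mem_nhdsWithin) (hucont s hs) (hucont s hs)
      (h0contd (u s) (u s) s hs)
  have hfc : ContinuousOn (fun τ => (inner ℂ (f τ) (ι (w τ)) : ℂ)) (Set.Icc 0 T) :=
    ContinuousOn.inner hf (ι.continuous.comp_continuousOn hwcont)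
  -- the derivative of the energy
  have hre : ∀ x : H, ((inner ℂ x x : ℂ)).re = ‖x‖ ^ 2 := fun x => by
    simpa using inner_self_eq_norm_sq (𝕜 := ℂ) x
  have hEd : ∀ t ∈ Set.Icc (0:ℝ) T, HasDerivWithinAt
      (fun s => ‖ι (w s)‖ ^ 2 + (a₀ s (u s) (u s)).re)
      (-(2 * (a₁ t (u t) (w t)).re) + (a₀' t (u t) (u t)).re
        + 2 * ((inner ℂ (f t) (ι (w t)) : ℂ)).re) (Set.Icc 0 T) t := by
    intro t ht
    have hιw' := ((ι.restrictScalars ℝ).hasFDerivAt (x := w t)).comp_hasDerivWithinAt t (hw t ht)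
    have hιw : HasDerivWithinAt (fun s => ι (w s)) (ι (z t)) (Set.Icc 0 T) t := hιw'
    have hinner : HasDerivWithinAt (fun s => (inner ℂ (ι (w s)) (ι (w s)) : ℂ))
        ((inner ℂ (ι (w t)) (ι (z t)) : ℂ) + (inner ℂ (ι (z t)) (ι (w t)) : ℂ))
        (Set.Icc 0 T) t := hιw.inner ℂ hιw
    have hnormsq : HasDerivWithinAt (fun s => ‖ι (w s)‖ ^ 2)
        (((inner ℂ (ι (w t)) (ι (z t)) : ℂ) + (inner ℂ (ι (z t)) (ι (w t)) : ℂ)).re)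
        (Set.Icc 0 T) t := by
      have h2 := Complex.reCLM.hasFDerivAt.comp_hasDerivWithinAt t hinner
      have hfun : (fun s => ‖ι (w s)‖ ^ 2)
          = fun s => ((inner ℂ (ι (w s)) (ι (w s)) : ℂ)).re := by
        funext s; rw [hre]
      rw [hfun]
      exact h2
    have ha0d : HasDerivWithinAt (fun s => a₀ s (u s) (u s))
        (a₀' t (u t) (u t) + a₀ t (w t) (u t) + a₀ t (u t) (w t)) (Set.Icc 0 T) t :=
      sesq_hasDeriv a₀ a₀' _ C h0add h0add2 h0smul1R h0smul2R h0bd h0deriv ht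
        (hu t ht) (hu t ht)
    have ha0re : HasDerivWithinAt (fun s => (a₀ s (u s) (u s)).re)
        ((a₀' t (u t) (u t) + a₀ t (w t) (u t) + a₀ t (u t) (w t)).re) (Set.Icc 0 T) t :=
      Complex.reCLM.hasFDerivAt.comp_hasDerivWithinAt t ha0d
    have hsum := hnormsq.add ha0re
    convert hsum using 1
    case e'_4 => rfl
    case e'_5 => rfl
    case e'_8 => rfl
    -- the two candidate derivatives agree, thanks to the equation
    have heqre := congrArg Complex.re (heq t ht (w t))
    simp only [Complex.add_re] at heqre ⊢
    have s1 : ((inner ℂ (ι (w t)) (ι (z t)) : ℂ)).re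
        = ((inner ℂ (ι (z t)) (ι (w t)) : ℂ)).re := by
      rw [← inner_conj_symm (ι (z t)) (ι (w t)), Complex.conj_re]
    have s2 : ((inner ℂ (ι (w t)) (f t) : ℂ)).re = ((inner ℂ (f t) (ι (w t)) : ℂ)).re := by
      rw [← inner_conj_symm (f t) (ι (w t)), Complex.conj_re]
    have s3 : (a₀ t (w t) (u t)).re = (a₀ t (u t) (w t)).re := by
      rw [h0herm t ht, Complex.conj_re]
    rw [s3]
    linarith [heqre, s1, s2]
  -- integration
  intro t ht
  rcases eq_or_lt_of_le ht.1 with h0t | h0t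
  · rw [← h0t]
    simp
  have hsub : Set.Icc (0:ℝ) t ⊆ Set.Icc (0:ℝ) T := Set.Icc_subset_Icc le_rfl ht.2
  have hEcontT : ContinuousOn (fun s => ‖ι (w s)‖ ^ 2 + (a₀ s (u s) (u s)).re)
      (Set.Icc 0 T) := fun s hs => (hEd s hs).continuousWithinAt
  have hEcont : ContinuousOn (fun s => ‖ι (w s)‖ ^ 2 + (a₀ s (u s) (u s)).re)
      (Set.Icc 0 t) := hEcontT.mono hsub
  have hI1 : IntervalIntegrable (fun τ => (a₁ τ (u τ) (w τ)).re) volume 0 t := by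
    apply ContinuousOn.intervalIntegrable
    rw [Set.uIcc_of_le ht.1]
    exact (Complex.continuous_re.comp_continuousOn ha1c).mono hsub
  have hI2 : IntervalIntegrable (fun τ => (a₀' τ (u τ) (u τ)).re) volume 0 t := by
    apply ContinuousOn.intervalIntegrable
    rw [Set.uIcc_of_le ht.1]
    exact (Complex.continuous_re.comp_continuousOn ha0'c).mono hsub
  have hI3 : IntervalIntegrable (fun τ => ((inner ℂ (f τ) (ι (w τ)) : ℂ)).re) volume 0 t := by
    apply ContinuousOn.intervalIntegrable
    rw [Set.uIcc_of_le ht.1]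
    exact (Complex.continuous_re.comp_continuousOn hfc).mono hsub
  have hIA : IntervalIntegrable (fun τ => -(2 * (a₁ τ (u τ) (w τ)).re)) volume 0 t :=
    (hI1.const_mul 2).neg
  have hIC : IntervalIntegrable (fun τ => 2 * ((inner ℂ (f τ) (ι (w τ)) : ℂ)).re) volume 0 t :=
    hI3.const_mul 2
  have hgint : IntervalIntegrable (fun τ => -(2 * (a₁ τ (u τ) (w τ)).re)
      + (a₀' τ (u τ) (u τ)).re + 2 * ((inner ℂ (f τ) (ι (w τ)) : ℂ)).re) volume 0 t :=
    (hIA.add hI2).add hIC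
  have hFTC : (∫ τ in (0:ℝ)..t, (-(2 * (a₁ τ (u τ) (w τ)).re)
        + (a₀' τ (u τ) (u τ)).re + 2 * ((inner ℂ (f τ) (ι (w τ)) : ℂ)).re))
      = (‖ι (w t)‖ ^ 2 + (a₀ t (u t) (u t)).re)
        - (‖ι (w 0)‖ ^ 2 + (a₀ 0 (u 0) (u 0)).re) := by
    refine integral_eq_sub_of_hasDeriv_right_of_le ht.1 hEcont (fun x hx => ?_) hgint
    have hxT : x ∈ Set.Ioo (0:ℝ) T := ⟨hx.1, lt_of_lt_of_le hx.2 ht.2⟩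
    exact ((hEd x (Set.Ioo_subset_Icc_self hxT)).hasDerivAt
      (Icc_mem_nhds hxT.1 hxT.2)).hasDerivWithinAt
  have hsplit : (∫ τ in (0:ℝ)..t, (-(2 * (a₁ τ (u τ) (w τ)).re)
        + (a₀' τ (u τ) (u τ)).re + 2 * ((inner ℂ (f τ) (ι (w τ)) : ℂ)).re))
      = -(2 * ∫ τ in (0:ℝ)..t, (a₁ τ (u τ) (w τ)).re)
        + (∫ τ in (0:ℝ)..t, (a₀' τ (u τ) (u τ)).re)
        + 2 * ∫ τ in (0:ℝ)..t, ((inner ℂ (f τ) (ι (w τ)) : ℂ)).re := by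
    rw [intervalIntegral.integral_add (hIA.add hI2) hIC,
      intervalIntegral.integral_add hIA hI2,
      intervalIntegral.integral_neg, intervalIntegral.integral_const_mul,
      intervalIntegral.integral_const_mul]
  rw [hsplit] at hFTC
  linarith [hFTC]
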